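/- Polynomial approximation of an intersection of halfspaces I: Let v_1,…,v_m ∈ ℝ^d satisfy ‖v_i‖ ≤ 1 for all i, and let γ ∈ (0,1). Then there exists a multivariate polynomial p : ℝ^d → ℝ such that (1) p(x) ≥ 1/2 for all x in R⁺ = ∩_{i=1}^m {x ∈ ℝ^d : ‖x‖ ≤ 1, ⟨v_i,x⟩ ≥ γ}; (2) p(x) ≤ −1/2 for all x in R⁻ = ∪_{i=1}^m {x ∈ ℝ^d : ‖x‖ ≤ 1, ⟨v_i,x⟩ ≤ −γ}; (3) deg(p) ≤ ⌈log₂(2m)⌉·⌈√(1/γ)⌉; and (4) ‖p‖ ≤ [188·⌈log₂(2m)⌉·⌈√(1/γ)⌉]^{(⌈log₂(2m)⌉·⌈√(1/γ)⌉)/2}. -/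

import Mathlib

open scoped RealInnerProductSpace
open Finset

/-- The norm of a multivariate polynomial: the Euclidean norm of its coefficient vector. -/
noncomputable def polyNorm {d : ℕ} (p : MvPolynomial (Fin d) ℝ) : ℝ :=
  Real.sqrt (∑ α ∈ p.support, (p.coeff α) ^ 2)

section AuxLemmas


noncomputable def l1 (P : Polynomial ℝ) : ℝ := ∑ k ∈ P.support, |P.coeff k|

lemma l1_nonneg (P : Polynomial ℝ) : 0 ≤ l1 P := Finset.sum_nonneg fun _ _ => abs_nonneg _

lemma l1_eq_range {P : Polynomial ℝ} {N : ℕ} (h : P.natDegree < N) :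
    l1 P = ∑ k ∈ range N, |P.coeff k| := by
  refine Finset.sum_subset ?_ ?_
  · intro k hk
    exact mem_range.2 (lt_of_le_of_lt (Polynomial.le_natDegree_of_mem_supp k hk) h)
  · intro k _ hk
    rw [Polynomial.notMem_support_iff.1 hk, abs_zero]

lemma l1_mul_le (P Q : Polynomial ℝ) : l1 (P * Q) ≤ l1 P * l1 Q := by
  set N := P.natDegree + Q.natDegree + 1 with hN
  have h1 : (P * Q).natDegree < N := lt_of_le_of_lt Polynomial.natDegree_mul_le (Nat.lt_succ_self _)
  rw [l1_eq_range h1, l1_eq_range (show P.natDegree < N by omega),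
    l1_eq_range (show Q.natDegree < N by omega)]
  have hdisj : (↑(range N) : Set ℕ).PairwiseDisjoint (fun k => Finset.HasAntidiagonal.antidiagonal k) := by
    intro i _ j _ hij
    simp only [Finset.disjoint_left, Finset.HasAntidiagonal.mem_antidiagonal]
    intro x h1 h2
    omega
  calc ∑ k ∈ range N, |(P * Q).coeff k|
      ≤ ∑ k ∈ range N, ∑ x ∈ Finset.HasAntidiagonal.antidiagonal k, |P.coeff x.1| * |Q.coeff x.2| := by
        refine Finset.sum_le_sum fun k _ => ?_
        rw [Polynomial.coeff_mul]
        refine (Finset.abs_sum_le_sum_abs _ _).trans (le_of_eq ?_)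
        exact Finset.sum_congr rfl fun x _ => abs_mul _ _
    _ = ∑ x ∈ (range N).biUnion (fun k => Finset.HasAntidiagonal.antidiagonal k), |P.coeff x.1| * |Q.coeff x.2| :=
        (Finset.sum_biUnion hdisj).symm
    _ ≤ ∑ x ∈ range N ×ˢ range N, |P.coeff x.1| * |Q.coeff x.2| := by
        refine Finset.sum_le_sum_of_subset_of_nonneg ?_ (fun _ _ _ => by positivity)
        intro x hx
        simp only [Finset.mem_biUnion, Finset.mem_range, Finset.HasAntidiagonal.mem_antidiagonal] at hx
        obtain ⟨k, hk, hxk⟩ := hx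
        simp only [Finset.mem_product, Finset.mem_range]
        omega
    _ = (∑ k ∈ range N, |P.coeff k|) * ∑ k ∈ range N, |Q.coeff k| := by
        rw [Finset.sum_product, Finset.sum_mul_sum]

lemma l1_add_le (P Q : Polynomial ℝ) : l1 (P + Q) ≤ l1 P + l1 Q := by
  set N := max P.natDegree Q.natDegree + 1 with hN
  have h1 : (P + Q).natDegree < N :=
    lt_of_le_of_lt (Polynomial.natDegree_add_le _ _) (Nat.lt_succ_self _)
  rw [l1_eq_range h1, l1_eq_range (show P.natDegree < N by omega),
    l1_eq_range (show Q.natDegree < N by omega), ← Finset.sum_add_distrib]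
  exact Finset.sum_le_sum fun k _ => by rw [Polynomial.coeff_add]; exact abs_add_le _ _

lemma l1_one : l1 (1 : Polynomial ℝ) = 1 := by
  rw [l1_eq_range (show (1:Polynomial ℝ).natDegree < 1 by simp)]
  simp

lemma l1_C (c : ℝ) : l1 (Polynomial.C c) = |c| := by
  rw [l1_eq_range (show (Polynomial.C c).natDegree < 1 by simp)]
  simp

lemma l1_X : l1 (Polynomial.X : Polynomial ℝ) = 1 := by
  rw [l1_eq_range (show (Polynomial.X : Polynomial ℝ).natDegree < 2 by simp)]
  norm_num [Finset.sum_range_succ, Polynomial.coeff_X]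

lemma l1_pow_le (P : Polynomial ℝ) (n : ℕ) : l1 (P ^ n) ≤ l1 P ^ n := by
  induction n with
  | zero => simp [l1_one]
  | succ n ih =>
    rw [pow_succ, pow_succ]
    exact (l1_mul_le _ _).trans (mul_le_mul_of_nonneg_right ih (l1_nonneg P))

lemma l1_sub_le (P Q : Polynomial ℝ) : l1 (P - Q) ≤ l1 P + l1 Q := by
  have : l1 (-Q) = l1 Q := by
    unfold l1
    rw [Polynomial.support_neg]
    exact Finset.sum_congr rfl fun k _ => by simp
  rw [sub_eq_add_neg]
  exact (l1_add_le _ _).trans (by rw [this])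

namespace PolyNormAux

variable {d : ℕ}

lemma polyNorm_nonneg (p : MvPolynomial (Fin d) ℝ) : 0 ≤ polyNorm p := Real.sqrt_nonneg _

lemma polyNorm_eq_of_subset {p : MvPolynomial (Fin d) ℝ} {S : Finset (Fin d →₀ ℕ)}
    (h : p.support ⊆ S) : polyNorm p = Real.sqrt (∑ α ∈ S, (p.coeff α) ^ 2) := by
  unfold polyNorm
  congr 1
  refine Finset.sum_subset h fun α _ hα => ?_
  rw [MvPolynomial.notMem_support_iff.1 hα]
  ring

lemma sqrt_sum_sq_add_le (S : Finset (Fin d →₀ ℕ)) (f g : (Fin d →₀ ℕ) → ℝ) :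
    Real.sqrt (∑ α ∈ S, (f α + g α) ^ 2) ≤
      Real.sqrt (∑ α ∈ S, f α ^ 2) + Real.sqrt (∑ α ∈ S, g α ^ 2) := by
  set A := ∑ α ∈ S, f α ^ 2 with hA
  set B := ∑ α ∈ S, g α ^ 2 with hB
  have hA0 : 0 ≤ A := Finset.sum_nonneg fun _ _ => sq_nonneg _
  have hB0 : 0 ≤ B := Finset.sum_nonneg fun _ _ => sq_nonneg _
  have hcs : (∑ α ∈ S, f α * g α) ≤ Real.sqrt A * Real.sqrt B := by
    have h1 : (∑ α ∈ S, f α * g α) ^ 2 ≤ A * B := Finset.sum_mul_sq_le_sq_mul_sq S f g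
    have h2 : (∑ α ∈ S, f α * g α) ≤ |∑ α ∈ S, f α * g α| := le_abs_self _
    calc (∑ α ∈ S, f α * g α) ≤ |∑ α ∈ S, f α * g α| := h2
      _ = Real.sqrt ((∑ α ∈ S, f α * g α) ^ 2) := (Real.sqrt_sq_eq_abs _).symm
      _ ≤ Real.sqrt (A * B) := Real.sqrt_le_sqrt h1
      _ = Real.sqrt A * Real.sqrt B := Real.sqrt_mul hA0 _
  have hexp : ∑ α ∈ S, (f α + g α) ^ 2 = A + 2 * (∑ α ∈ S, f α * g α) + B := by
    rw [hA, hB, Finset.mul_sum, ← Finset.sum_add_distrib, ← Finset.sum_add_distrib]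
    exact Finset.sum_congr rfl fun α _ => by ring
  have hle : ∑ α ∈ S, (f α + g α) ^ 2 ≤ (Real.sqrt A + Real.sqrt B) ^ 2 := by
    rw [hexp, add_sq]
    have := Real.sq_sqrt hA0
    have := Real.sq_sqrt hB0
    nlinarith [hcs]
  calc Real.sqrt (∑ α ∈ S, (f α + g α) ^ 2) ≤ Real.sqrt ((Real.sqrt A + Real.sqrt B) ^ 2) :=
        Real.sqrt_le_sqrt hle
    _ = |Real.sqrt A + Real.sqrt B| := Real.sqrt_sq_eq_abs _
    _ = Real.sqrt A + Real.sqrt B := abs_of_nonneg (by positivity)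

lemma polyNorm_add_le (p q : MvPolynomial (Fin d) ℝ) :
    polyNorm (p + q) ≤ polyNorm p + polyNorm q := by
  classical
  set S := p.support ∪ q.support with hS
  have hp : p.support ⊆ S := Finset.subset_union_left
  have hq : q.support ⊆ S := Finset.subset_union_right
  have hpq : (p + q).support ⊆ S := MvPolynomial.support_add
  rw [polyNorm_eq_of_subset hp, polyNorm_eq_of_subset hq, polyNorm_eq_of_subset hpq]
  have : ∀ α ∈ S, (p + q).coeff α = p.coeff α + q.coeff α := fun α _ =>
    MvPolynomial.coeff_add α p q
  calc Real.sqrt (∑ α ∈ S, ((p + q).coeff α) ^ 2)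
      = Real.sqrt (∑ α ∈ S, (p.coeff α + q.coeff α) ^ 2) := by
        simp [MvPolynomial.coeff_add]
    _ ≤ _ := sqrt_sum_sq_add_le S _ _

lemma polyNorm_zero : polyNorm (0 : MvPolynomial (Fin d) ℝ) = 0 := by
  simp [polyNorm]

lemma polyNorm_sum_le {ι : Type*} (s : Finset ι) (f : ι → MvPolynomial (Fin d) ℝ) :
    polyNorm (∑ i ∈ s, f i) ≤ ∑ i ∈ s, polyNorm (f i) := by
  classical
  induction s using Finset.cons_induction with
  | empty => simp [polyNorm_zero]
  | cons a s ha ih =>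
    rw [Finset.sum_cons, Finset.sum_cons]
    exact (polyNorm_add_le _ _).trans (add_le_add le_rfl ih)

lemma polyNorm_neg (p : MvPolynomial (Fin d) ℝ) : polyNorm (-p) = polyNorm p := by
  unfold polyNorm
  rw [MvPolynomial.support_neg]
  congr 1
  exact Finset.sum_congr rfl fun α _ => by simp

lemma polyNorm_C_le (c : ℝ) : polyNorm (MvPolynomial.C c : MvPolynomial (Fin d) ℝ) ≤ |c| := by
  have h : (MvPolynomial.C c : MvPolynomial (Fin d) ℝ).support ⊆ {0} := by
    rw [MvPolynomial.C_apply, MvPolynomial.support_monomial]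
    split <;> simp
  rw [polyNorm_eq_of_subset h]
  simp only [Finset.sum_singleton]
  rw [MvPolynomial.coeff_C]
  simp [Real.sqrt_sq_eq_abs]

lemma polyNorm_smul_le (c : ℝ) (p : MvPolynomial (Fin d) ℝ) :
    polyNorm (c • p) ≤ |c| * polyNorm p := by
  have h : (c • p).support ⊆ p.support := MvPolynomial.support_smul
  rw [polyNorm_eq_of_subset h]
  unfold polyNorm
  have : ∑ α ∈ p.support, ((c • p).coeff α) ^ 2 = c ^ 2 * ∑ α ∈ p.support, (p.coeff α) ^ 2 := by
    rw [Finset.mul_sum]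
    exact Finset.sum_congr rfl fun α _ => by rw [MvPolynomial.coeff_smul]; simp [smul_eq_mul]; ring
  rw [this, Real.sqrt_mul (sq_nonneg c), Real.sqrt_sq_eq_abs]

end PolyNormAux

namespace PolyNormAux
variable {d : ℕ}

/-- embed a function `Fin d → ℕ` as a finsupp -/
noncomputable def toF (α : Fin d → ℕ) : Fin d →₀ ℕ := Finsupp.equivFunOnFinite.symm α

lemma toF_injective : Function.Injective (toF (d := d)) := Finsupp.equivFunOnFinite.symm.injective

@[simp] lemma toF_apply (α : Fin d → ℕ) (j : Fin d) : toF α j = α j := rfl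

/-- a sum of monomials with distinct exponents has polyNorm = sqrt of sum of squares -/
lemma polyNorm_sum_monomial_le (S : Finset (Fin d → ℕ)) (c : (Fin d → ℕ) → ℝ) :
    polyNorm (∑ α ∈ S, MvPolynomial.monomial (toF α) (c α)) ≤
      Real.sqrt (∑ α ∈ S, (c α) ^ 2) := by
  classical
  set p := ∑ α ∈ S, MvPolynomial.monomial (toF α) (c α) with hp
  have hsupp : p.support ⊆ S.image toF := by
    refine (MvPolynomial.support_sum).trans ?_
    intro β hβ
    simp only [Finset.mem_biUnion] at hβ
    obtain ⟨α, hα, hβ2⟩ := hβ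
    have := MvPolynomial.support_monomial (s := toF α) (a := c α) ▸ hβ2
    by_cases hc : c α = 0
    · simp [hc] at this
    · simp [hc] at this
      subst this
      exact Finset.mem_image_of_mem _ hα
  rw [polyNorm_eq_of_subset hsupp]
  apply Real.sqrt_le_sqrt
  rw [Finset.sum_image (fun a ha b hb h => toF_injective h)]
  refine Finset.sum_le_sum fun α hα => ?_
  have hco : p.coeff (toF α) = c α := by
    rw [hp, MvPolynomial.coeff_sum]
    rw [Finset.sum_eq_single α]
    · simp [MvPolynomial.coeff_monomial]
    · intro b hb hne
      rw [MvPolynomial.coeff_monomial]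
      rw [if_neg (fun h => hne (toF_injective h))]
    · intro h
      exact absurd hα h
  rw [hco]

lemma prod_pow_linear (w : Fin d → ℝ) (α : Fin d → ℕ) :
    ∏ j, (MvPolynomial.C (w j) * MvPolynomial.X j : MvPolynomial (Fin d) ℝ) ^ α j =
      MvPolynomial.monomial (toF α) (∏ j, w j ^ α j) := by
  rw [MvPolynomial.monomial_eq]
  rw [Finsupp.prod_fintype _ _ (fun i => pow_zero _)]
  rw [map_prod]
  rw [← Finset.prod_mul_distrib]
  refine Finset.prod_congr rfl fun j _ => ?_
  rw [mul_pow, map_pow]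
  simp

end PolyNormAux

namespace PolyNormAux

lemma multinomial_le_factorial {α : Fin d → ℕ} {k : ℕ} (h : ∑ j, α j = k) :
    Nat.multinomial Finset.univ α ≤ k.factorial := by
  have := Nat.multinomial_spec Finset.univ α
  rw [h] at this
  calc Nat.multinomial Finset.univ α = 1 * Nat.multinomial Finset.univ α := (one_mul _).symm
    _ ≤ (∏ j, (α j).factorial) * Nat.multinomial Finset.univ α := by
        apply Nat.mul_le_mul_right
        exact Finset.one_le_prod' fun j _ => Nat.one_le_iff_ne_zero.2 (Nat.factorial_ne_zero _)
    _ = k.factorial := this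

lemma polyNorm_linear_pow (w : Fin d → ℝ) (hw : ∑ j, (w j) ^ 2 ≤ 1) (k : ℕ) :
    polyNorm ((∑ j, MvPolynomial.C (w j) * MvPolynomial.X j) ^ k) ≤
      Real.sqrt (k.factorial) := by
  classical
  rw [Finset.sum_pow_eq_sum_piAntidiag]
  have hexp : ∀ α ∈ Finset.univ.piAntidiag k,
      (Nat.multinomial Finset.univ α : MvPolynomial (Fin d) ℝ) *
        ∏ j, (MvPolynomial.C (w j) * MvPolynomial.X j) ^ α j =
      MvPolynomial.monomial (toF α)
        ((Nat.multinomial Finset.univ α : ℝ) * ∏ j, w j ^ α j) := by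
    intro α _
    rw [prod_pow_linear]
    rw [show ((Nat.multinomial Finset.univ α : ℕ) : MvPolynomial (Fin d) ℝ) =
      MvPolynomial.C ((Nat.multinomial Finset.univ α : ℕ) : ℝ) by push_cast; rfl]
    rw [MvPolynomial.C_mul_monomial]
  rw [Finset.sum_congr rfl hexp]
  refine (polyNorm_sum_monomial_le _ _).trans ?_
  apply Real.sqrt_le_sqrt
  have key : ∑ α ∈ Finset.univ.piAntidiag k,
      ((Nat.multinomial Finset.univ α : ℝ) * ∏ j, w j ^ α j) ^ 2 ≤
      (k.factorial : ℝ) * ∑ α ∈ Finset.univ.piAntidiag k,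
        (Nat.multinomial Finset.univ α : ℝ) * ∏ j, (w j ^ 2) ^ α j := by
    rw [Finset.mul_sum]
    refine Finset.sum_le_sum fun α hα => ?_
    have hsum : ∑ j, α j = k := (Finset.mem_piAntidiag.1 hα).1
    have hmle : (Nat.multinomial Finset.univ α : ℝ) ≤ (k.factorial : ℝ) := by
      exact_mod_cast multinomial_le_factorial hsum
    have hm0 : (0:ℝ) ≤ (Nat.multinomial Finset.univ α : ℝ) := Nat.cast_nonneg _
    have hprod : (∏ j, w j ^ α j) ^ 2 = ∏ j, (w j ^ 2) ^ α j := by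
      rw [← Finset.prod_pow]
      exact Finset.prod_congr rfl fun j _ => by ring
    have hp0 : (0:ℝ) ≤ ∏ j, (w j ^ 2) ^ α j :=
      Finset.prod_nonneg fun j _ => pow_nonneg (sq_nonneg _) _
    calc ((Nat.multinomial Finset.univ α : ℝ) * ∏ j, w j ^ α j) ^ 2
        = (Nat.multinomial Finset.univ α : ℝ) ^ 2 * ∏ j, (w j ^ 2) ^ α j := by
          rw [mul_pow, hprod]
      _ ≤ (k.factorial : ℝ) * (Nat.multinomial Finset.univ α : ℝ) * ∏ j, (w j ^ 2) ^ α j := by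
          apply mul_le_mul_of_nonneg_right _ hp0
          rw [sq]
          exact mul_le_mul_of_nonneg_right hmle hm0
      _ = (k.factorial : ℝ) * ((Nat.multinomial Finset.univ α : ℝ) * ∏ j, (w j ^ 2) ^ α j) := by
          ring
  refine key.trans ?_
  rw [← Finset.sum_pow_eq_sum_piAntidiag Finset.univ (fun j => w j ^ 2) k]
  calc (k.factorial : ℝ) * (∑ j, w j ^ 2) ^ k ≤ (k.factorial : ℝ) * 1 := by
        apply mul_le_mul_of_nonneg_left _ (Nat.cast_nonneg _)
        exact pow_le_one₀ (Finset.sum_nonneg fun j _ => sq_nonneg _) hw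
    _ = (k.factorial : ℝ) := mul_one _

end PolyNormAux


namespace ChebAux

lemma T_real_cosh (t : ℝ) (n : ℤ) :
    (Polynomial.Chebyshev.T ℝ n).eval (Real.cosh t) = Real.cosh (n * t) := by
  have h := Polynomial.Chebyshev.T_complex_cos (t * Complex.I) n
  rw [Complex.cos_mul_I] at h
  have h2 : (n : ℂ) * (t * Complex.I) = ((n * t : ℝ) : ℂ) * Complex.I := by push_cast; ring
  rw [h2, Complex.cos_mul_I] at h
  have h3 := Polynomial.Chebyshev.complex_ofReal_eval_T (Real.cosh t) n
  rw [Complex.ofReal_cosh, h] at h3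
  rw [← Complex.ofReal_cosh] at h3
  exact_mod_cast h3

/-- |T_n(x)| ≤ 1 on [-1,1] -/
lemma abs_T_le_one {x : ℝ} (h1 : -1 ≤ x) (h2 : x ≤ 1) (n : ℤ) :
    |(Polynomial.Chebyshev.T ℝ n).eval x| ≤ 1 := by
  have hx : x = Real.cos (Real.arccos x) := (Real.cos_arccos h1 h2).symm
  rw [hx, Polynomial.Chebyshev.T_real_cos]
  exact Real.abs_cos_le_one _

/-- auxiliary inverse cosh: for x ≥ 1, x = cosh (log (x + sqrt (x^2-1))) -/
lemma cosh_log_add_sqrt {x : ℝ} (hx : 1 ≤ x) :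
    Real.cosh (Real.log (x + Real.sqrt (x ^ 2 - 1))) = x := by
  have hs0 : 0 ≤ x ^ 2 - 1 := by nlinarith
  have hs : Real.sqrt (x ^ 2 - 1) ^ 2 = x ^ 2 - 1 := Real.sq_sqrt hs0
  have hpos : 0 < x + Real.sqrt (x ^ 2 - 1) := by
    have := Real.sqrt_nonneg (x ^ 2 - 1); linarith
  rw [Real.cosh_eq, Real.exp_log hpos, Real.exp_neg, Real.exp_log hpos]
  have hinv : (x + Real.sqrt (x ^ 2 - 1))⁻¹ = x - Real.sqrt (x ^ 2 - 1) := by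
    have hmul : (x - Real.sqrt (x ^ 2 - 1)) * (x + Real.sqrt (x ^ 2 - 1)) = 1 := by nlinarith
    field_simp
    nlinarith
  rw [hinv]
  ring

lemma log_add_sqrt_nonneg {x : ℝ} (hx : 1 ≤ x) :
    0 ≤ Real.log (x + Real.sqrt (x ^ 2 - 1)) := by
  apply Real.log_nonneg
  have := Real.sqrt_nonneg (x ^ 2 - 1); linarith

/-- T_n(x) ≥ 1 for x ≥ 1 -/
lemma one_le_T {x : ℝ} (hx : 1 ≤ x) (n : ℤ) :
    1 ≤ (Polynomial.Chebyshev.T ℝ n).eval x := by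
  have h := cosh_log_add_sqrt hx
  rw [← h, T_real_cosh]
  exact Real.one_le_cosh _

/-- T_n(y) ≥ -1 for y ≥ -1 -/
lemma neg_one_le_T {x : ℝ} (hx : -1 ≤ x) (n : ℤ) :
    -1 ≤ (Polynomial.Chebyshev.T ℝ n).eval x := by
  rcases le_or_gt x 1 with h | h
  · have := abs_T_le_one hx h n
    have := abs_le.1 this
    linarith [this.1]
  · linarith [one_le_T h.le n]

end ChebAux

namespace ChebAux

lemma log8_lt : Real.log 8 < 2.0795 := by
  have h2 : Real.log 2 < 0.6931472 := Real.log_two_lt_d9.trans (by norm_num)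
  have h8 : (8:ℝ) = 2 ^ 3 := by norm_num
  rw [h8, Real.log_pow]
  push_cast
  linarith

lemma log8_pos : 0 < Real.log 8 := Real.log_pos (by norm_num)

lemma cosh_log8 : Real.cosh (Real.log 8) = 65 / 16 := by
  rw [Real.cosh_eq, Real.exp_log (by norm_num : (0:ℝ) < 8), Real.exp_neg,
    Real.exp_log (by norm_num : (0:ℝ) < 8)]
  norm_num

lemma exp_le_inv_one_sub {q : ℝ} (h0 : 0 ≤ q) (h1 : q < 1) : Real.exp q ≤ 1 / (1 - q) := by
  have h := Real.add_one_le_exp (-q)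
  have hpos : 0 < 1 - q := by linarith
  rw [le_div_iff₀ hpos]
  have hexp : 0 < Real.exp (-q) := Real.exp_pos _
  calc Real.exp q * (1 - q) ≤ Real.exp q * Real.exp (-q) := by
        apply mul_le_mul_of_nonneg_left _ (Real.exp_nonneg _)
        linarith
    _ = 1 := by rw [← Real.exp_add]; simp

set_option maxHeartbeats 1000000 in
lemma cosh_small (K : ℕ) (hK : 2 ≤ K) :
    Real.cosh (Real.log 8 / K) ≤ 1 + 4 / ((K:ℝ) ^ 2 + 1) := by
  set c := Real.log 8 with hc
  have hc0 : 0 < c := log8_pos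
  have hc1 : c < 2.0795 := log8_lt
  have hKR : (2:ℝ) ≤ (K:ℝ) := by exact_mod_cast hK
  have hK0 : (0:ℝ) < (K:ℝ) := by linarith
  set M := (K:ℝ) ^ 2 with hM
  have hM4 : 4 ≤ M := by nlinarith
  set y := c / K with hy
  set q := (y / 2) ^ 2 / 2 with hq
  have hy0 : 0 < y := div_pos hc0 hK0
  have hqval : q = c ^ 2 / (8 * M) := by
    rw [hq, hy, hM]; field_simp; ring
  have hq0 : 0 ≤ q := by positivity
  have hc2 : c ^ 2 ≤ 4.325 := by nlinarith
  have hqle : q ≤ 4.325 / (8 * M) := by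
    rw [hqval]
    gcongr
  have hq1 : q < 1 := lt_of_le_of_lt hqle (by rw [div_lt_one (by positivity)]; nlinarith)
  -- cosh (y/2) ≤ 1/(1-q)
  have hhalf : Real.cosh (y / 2) ≤ 1 / (1 - q) :=
    (Real.cosh_le_exp_half_sq _).trans (exp_le_inv_one_sub hq0 hq1)
  -- cosh y = 2 cosh(y/2)^2 - 1
  have hdouble : Real.cosh y = 2 * Real.cosh (y / 2) ^ 2 - 1 := by
    have h2 := Real.cosh_two_mul (y / 2)
    have h3 := Real.sinh_sq (y / 2)
    rw [show 2 * (y / 2) = y by ring] at h2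
    linarith
  have hch0 : 1 ≤ Real.cosh (y / 2) := Real.one_le_cosh _
  have h1q : 0 < 1 - q := by linarith
  have hq32 : q ≤ 4.325 / 32 := by
    refine hqle.trans ?_
    rw [div_le_div_iff₀ (by positivity) (by norm_num)]
    nlinarith
  have hqM : 8 * M * q ≤ 4.325 := by
    calc 8 * M * q ≤ 8 * M * (4.325 / (8 * M)) := mul_le_mul_of_nonneg_left hqle (by positivity)
      _ = 4.325 := by field_simp
  have hstep : 2 * (1 / (1 - q)) ^ 2 ≤ 2 + 4 / (M + 1) := by
    rw [div_pow, one_pow, mul_one_div, div_le_iff₀ (by positivity)]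
    have heq : (2 + 4 / (M + 1)) * (1 - q) ^ 2 = (2 * M + 6) * (1 - q) ^ 2 / (M + 1) := by
      field_simp
      ring
    rw [heq, le_div_iff₀ (by linarith : (0:ℝ) < M + 1)]
    nlinarith [sq_nonneg q]
  calc Real.cosh y = 2 * Real.cosh (y / 2) ^ 2 - 1 := hdouble
    _ ≤ 2 * (1 / (1 - q)) ^ 2 - 1 := by nlinarith
    _ ≤ 1 + 4 / (M + 1) := by linarith

lemma T_ge_four {K : ℕ} (hK : 2 ≤ K) {x : ℝ}
    (hx : 1 + 4 / ((K:ℝ) ^ 2 + 1) ≤ x) :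
    4 ≤ (Polynomial.Chebyshev.T ℝ (K:ℤ)).eval x := by
  have hx1 : 1 ≤ x := by
    have : (0:ℝ) < 4 / ((K:ℝ)^2+1) := by positivity
    linarith
  set t := Real.log (x + Real.sqrt (x ^ 2 - 1)) with ht
  have hcosh : Real.cosh t = x := cosh_log_add_sqrt hx1
  have ht0 : 0 ≤ t := log_add_sqrt_nonneg hx1
  have hKR : (2:ℝ) ≤ (K:ℝ) := by exact_mod_cast hK
  have hK0 : (0:ℝ) < (K:ℝ) := by linarith
  have hsmall := cosh_small K hK
  have hct : Real.cosh (Real.log 8 / K) ≤ Real.cosh t := by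
    rw [hcosh]; exact hsmall.trans hx
  have habs : |Real.log 8 / (K:ℝ)| ≤ |t| := Real.cosh_le_cosh.1 hct
  have hlt : Real.log 8 / (K:ℝ) ≤ t := by
    have h1 : 0 ≤ Real.log 8 / (K:ℝ) := le_of_lt (div_pos log8_pos hK0)
    rw [abs_of_nonneg h1, abs_of_nonneg ht0] at habs
    exact habs
  have hc : Real.log 8 ≤ (K:ℝ) * t := by
    rw [div_le_iff₀ hK0] at hlt
    linarith
  have hfin : Real.cosh (Real.log 8) ≤ Real.cosh ((K:ℝ) * t) := by
    rw [Real.cosh_le_cosh, abs_of_nonneg log8_pos.le, abs_of_nonneg (by positivity)]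
    exact hc
  rw [cosh_log8] at hfin
  have heval : (Polynomial.Chebyshev.T ℝ (K:ℤ)).eval x = Real.cosh ((K:ℝ) * t) := by
    rw [← hcosh, T_real_cosh]
    norm_num
  rw [heval]
  linarith

end ChebAux

namespace ChebAux2
open Polynomial

lemma T_cast_add_two (n : ℕ) :
    Polynomial.Chebyshev.T ℝ ((n:ℤ) + 2) =
      2 * Polynomial.X * Polynomial.Chebyshev.T ℝ ((n:ℤ) + 1) - Polynomial.Chebyshev.T ℝ (n:ℤ) :=
  Polynomial.Chebyshev.T_add_two ℝ (n:ℤ)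

lemma natDegree_T_le : ∀ n : ℕ, (Polynomial.Chebyshev.T ℝ (n:ℤ)).natDegree ≤ n := by
  intro n
  induction n using Nat.twoStepInduction with
  | zero => simp [Polynomial.Chebyshev.T_zero]
  | one => simpa [Polynomial.Chebyshev.T_one] using Polynomial.natDegree_X_le
  | more n ih1 ih2 =>
    have h := T_cast_add_two n
    rw [show ((n + 2 : ℕ) : ℤ) = (n:ℤ) + 2 by push_cast; ring, h]
    refine (Polynomial.natDegree_sub_le _ _).trans ?_
    have h1 : (2 * Polynomial.X * Polynomial.Chebyshev.T ℝ ((n:ℤ) + 1)).natDegree ≤ n + 2 := by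
      refine Polynomial.natDegree_mul_le.trans ?_
      have h2 : (2 * Polynomial.X : Polynomial ℝ).natDegree ≤ 1 :=
        Polynomial.natDegree_mul_le.trans (by simpa using Polynomial.natDegree_X_le)
      have h3 : (Polynomial.Chebyshev.T ℝ ((n:ℤ) + 1)).natDegree ≤ n + 1 := by
        rw [show (n:ℤ) + 1 = ((n + 1 : ℕ) : ℤ) by push_cast; ring]
        exact ih2
      omega
    have h4 : (Polynomial.Chebyshev.T ℝ (n:ℤ)).natDegree ≤ n + 2 := ih1.trans (by omega)
    exact max_le h1 h4

/-- l1 bound for T_n composed with an affine map g with l1 g ≤ 3 -/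
lemma l1_T_comp_le (g : Polynomial ℝ) (hg : l1 g ≤ 3) :
    ∀ n : ℕ, l1 ((Polynomial.Chebyshev.T ℝ (n:ℤ)).comp g) ≤ (31/5 : ℝ) ^ n := by
  intro n
  induction n using Nat.twoStepInduction with
  | zero => simp [Polynomial.Chebyshev.T_zero, l1_one]
  | one => simpa [Polynomial.Chebyshev.T_one] using hg.trans (by norm_num)
  | more n ih1 ih2 =>
    rw [show ((n + 2 : ℕ) : ℤ) = (n:ℤ) + 2 by push_cast; ring, T_cast_add_two n]
    rw [Polynomial.sub_comp, Polynomial.mul_comp, Polynomial.mul_comp, Polynomial.X_comp]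
    have hTn1 : l1 ((Polynomial.Chebyshev.T ℝ ((n:ℤ) + 1)).comp g) ≤ (31/5 : ℝ) ^ (n+1) := by
      rw [show (n:ℤ) + 1 = ((n + 1 : ℕ) : ℤ) by push_cast; ring]
      exact ih2
    have h2comp : ((2 : Polynomial ℝ).comp g) = 2 := by simp
    rw [h2comp]
    have hmul : l1 (2 * g * ((Polynomial.Chebyshev.T ℝ ((n:ℤ) + 1)).comp g)) ≤
        6 * (31/5 : ℝ) ^ (n+1) := by
      refine (l1_mul_le _ _).trans ?_
      have hl2g : l1 (2 * g) ≤ 6 := by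
        refine (l1_mul_le _ _).trans ?_
        have : l1 (2 : Polynomial ℝ) = 2 := by
          rw [show (2 : Polynomial ℝ) = Polynomial.C 2 from (map_ofNat Polynomial.C 2).symm, l1_C]
          norm_num
        rw [this]
        linarith [l1_nonneg g]
      calc l1 (2 * g) * l1 ((Polynomial.Chebyshev.T ℝ ((n:ℤ) + 1)).comp g)
          ≤ 6 * l1 ((Polynomial.Chebyshev.T ℝ ((n:ℤ) + 1)).comp g) :=
            mul_le_mul_of_nonneg_right hl2g (l1_nonneg _)
        _ ≤ 6 * (31/5 : ℝ) ^ (n+1) := by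
            exact mul_le_mul_of_nonneg_left hTn1 (by norm_num)
    refine (l1_sub_le _ _).trans ?_
    have : (6 : ℝ) * (31/5) ^ (n+1) + (31/5) ^ n ≤ (31/5) ^ (n+2) := by
      have hp : (0:ℝ) < (31/5) ^ n := by positivity
      rw [pow_succ, pow_succ, pow_succ]
      nlinarith
    linarith [ih1, hmul]

end ChebAux2

end AuxLemmas
section MainAux

open PolyNormAux ChebAux ChebAux2

lemma sqrt_pow_aux {x : ℝ} (hx : 0 ≤ x) : ∀ n : ℕ, Real.sqrt (x ^ n) = Real.sqrt x ^ n := by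
  intro n
  induction n with
  | zero => simp
  | succ k ih => rw [pow_succ, pow_succ, Real.sqrt_mul (pow_nonneg hx k), ih]

lemma key_ineq : ∀ n : ℕ, 1 ≤ n → 1 + (31/5 : ℝ) ^ n ≤ (137/10) ^ n := by
  intro n hn
  induction n with
  | zero => omega
  | succ k ih =>
    rcases Nat.eq_or_lt_of_le hn with h | h
    · norm_num [← h]
    · have hk : 1 ≤ k := by omega
      have := ih hk
      have hp : (0:ℝ) < (31/5) ^ k := by positivity
      rw [pow_succ, pow_succ]
      nlinarith

lemma neg_pow_bound {c z : ℝ} (hc : 0 ≤ c) (hz : -c ≤ z) (L : ℕ) : -(c ^ L) ≤ z ^ L := by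
  rcases le_or_gt 0 z with h | h
  · have : (0:ℝ) ≤ z ^ L := pow_nonneg h L
    have : (0:ℝ) ≤ c ^ L := pow_nonneg hc L
    linarith
  · have habs : |z| ≤ c := by
      rw [abs_of_neg h]; linarith
    have h1 : |z ^ L| ≤ c ^ L := by
      rw [abs_pow]
      exact pow_le_pow_left₀ (abs_nonneg _) habs L
    have := neg_abs_le (z ^ L)
    linarith [abs_le.1 h1]

end MainAux

open PolyNormAux ChebAux ChebAux2 Polynomial.Chebyshev in
set_option maxHeartbeats 4000000 in
/-- Polynomial approximation of an intersection of halfspaces I: for unit vectors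
`v_1,…,v_m` and margin `γ ∈ (0,1)` there is a multivariate polynomial that is `≥ 1/2` on
the intersection `R⁺` of the `γ`-shifted halfspaces within the unit ball, `≤ -1/2` on the
union `R⁻` of the opposite `γ`-shifted halfspaces within the unit ball, has degree at most
`⌈log₂(2m)⌉·⌈√(1/γ)⌉` and norm at most `(188·⌈log₂(2m)⌉·⌈√(1/γ)⌉)^{⌈log₂(2m)⌉·⌈√(1/γ)⌉/2}`. -/
theorem poly_approx_halfspaces_I
    (d m : ℕ) (v : Fin m → EuclideanSpace ℝ (Fin d)) (hv : ∀ i, ‖v i‖ ≤ 1)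
    (γ : ℝ) (hγ0 : 0 < γ) (hγ1 : γ < 1) :
    ∃ p : MvPolynomial (Fin d) ℝ,
      (∀ x : EuclideanSpace ℝ (Fin d), ‖x‖ ≤ 1 → (∀ i, γ ≤ ⟪v i, x⟫) →
        (1 : ℝ) / 2 ≤ MvPolynomial.eval (fun j => x j) p) ∧
      (∀ x : EuclideanSpace ℝ (Fin d), ‖x‖ ≤ 1 → (∃ i, ⟪v i, x⟫ ≤ -γ) →
        MvPolynomial.eval (fun j => x j) p ≤ -(1 / 2 : ℝ)) ∧
      p.totalDegree ≤ ⌈Real.logb 2 (2 * m)⌉₊ * ⌈Real.sqrt (1 / γ)⌉₊ ∧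
      polyNorm p ≤
        (188 * ((⌈Real.logb 2 (2 * m)⌉₊ * ⌈Real.sqrt (1 / γ)⌉₊ : ℕ) : ℝ)) ^
          (((⌈Real.logb 2 (2 * m)⌉₊ * ⌈Real.sqrt (1 / γ)⌉₊ : ℕ) : ℝ) / 2) := by
  classical
  by_cases hm : m = 0
  · subst hm
    refine ⟨MvPolynomial.C (1/2), ?_, ?_, ?_, ?_⟩
    · intro x _ _
      simp
    · rintro x - ⟨i, -⟩
      exact i.elim0
    · simp
    · have hL : ⌈Real.logb 2 (2 * ((0:ℕ):ℝ))⌉₊ = 0 := by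
        norm_num [Real.logb]
      rw [hL]
      simp only [Nat.zero_mul, Nat.cast_zero, CharP.cast_eq_zero]
      rw [show ((0:ℝ)/2 : ℝ) = 0 by norm_num, Real.rpow_zero]
      refine (polyNorm_C_le _).trans ?_
      rw [abs_of_pos (by norm_num : (0:ℝ) < 1/2)]
      norm_num
  -- main case
  have hm1 : 1 ≤ m := Nat.one_le_iff_ne_zero.2 hm
  have hmR : (1:ℝ) ≤ (m:ℝ) := by exact_mod_cast hm1
  set L := ⌈Real.logb 2 (2 * (m:ℝ))⌉₊ with hLdef
  set K := ⌈Real.sqrt (1 / γ)⌉₊ with hKdef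
  set n := L * K with hndef
  -- basic numeric facts
  have hγp : (0:ℝ) < 1 + γ := by linarith
  have hL1 : 1 ≤ L := by
    rw [hLdef]
    rw [Nat.one_le_ceil_iff]
    apply Real.logb_pos (by norm_num)
    linarith
  have hK2 : 2 ≤ K := by
    have h1γ : (1:ℝ) < 1/γ := by
      rw [lt_div_iff₀ hγ0]; linarith
    have hsq : (1:ℝ) < Real.sqrt (1/γ) := by
      have := Real.sqrt_lt_sqrt (by norm_num) h1γ
      rwa [Real.sqrt_one] at this
    have : (1:ℕ) < K := by
      rw [hKdef, Nat.lt_ceil]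
      exact_mod_cast hsq
    omega
  have hKR : (2:ℝ) ≤ (K:ℝ) := by exact_mod_cast hK2
  have hn2 : 2 ≤ n := le_trans hK2 (by calc K = 1 * K := (one_mul K).symm
    _ ≤ L * K := Nat.mul_le_mul_right K hL1)
  have h2L : 2 * (m:ℝ) ≤ 2 ^ L := by
    have h1 : Real.logb 2 (2 * m) ≤ (L:ℝ) := Nat.le_ceil _
    have h2 : (0:ℝ) < 2 * m := by linarith
    calc 2 * (m:ℝ) = 2 ^ Real.logb 2 (2 * m) := (Real.rpow_logb (by norm_num) (by norm_num) h2).symm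
      _ ≤ 2 ^ ((L:ℝ)) := Real.rpow_le_rpow_of_exponent_le (by norm_num) h1
      _ = 2 ^ L := Real.rpow_natCast 2 L
  have hγK : 1 ≤ γ * (K:ℝ) ^ 2 := by
    have h1 : Real.sqrt (1/γ) ≤ (K:ℝ) := Nat.le_ceil _
    have h2 : (1/γ : ℝ) ≤ (K:ℝ) ^ 2 := by
      have := pow_le_pow_left₀ (Real.sqrt_nonneg _) h1 2
      rwa [Real.sq_sqrt (by positivity : (0:ℝ) ≤ 1/γ)] at this
    calc (1:ℝ) = γ * (1/γ) := by field_simp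
      _ ≤ γ * (K:ℝ)^2 := by nlinarith
  -- the construction
  set a : ℝ := 2 / (1 + γ) with hadef
  set b : ℝ := (1 + 3*γ) / (1 + γ) with hbdef
  have ha0 : 0 < a := by positivity
  have hb0 : 0 < b := by positivity
  have hab : a + b = 3 := by
    rw [hadef, hbdef]
    field_simp
    ring
  set g : Polynomial ℝ := Polynomial.C a * Polynomial.X + Polynomial.C b with hgdef
  set W : Polynomial ℝ := Polynomial.C (1/2) * ((T ℝ (K:ℤ)).comp g) with hWdef
  set Q : Polynomial ℝ := W ^ L with hQdef
  set ℓ : Fin m → MvPolynomial (Fin d) ℝ :=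
    fun i => ∑ j, MvPolynomial.C (-(v i j)) * MvPolynomial.X j with hℓdef
  set p : MvPolynomial (Fin d) ℝ := MvPolynomial.C 1 - ∑ i, Polynomial.aeval (ℓ i) Q with hpdef
  -- evaluation lemmas
  have haeval_eq_eval : ∀ (x' : Fin d → ℝ) (z : MvPolynomial (Fin d) ℝ),
      (MvPolynomial.aeval x') z = MvPolynomial.eval x' z := fun x' z => by
    rw [MvPolynomial.aeval_def, MvPolynomial.eval]
    rfl
  have hpaeval : ∀ (t : ℝ) (q : Polynomial ℝ), (Polynomial.aeval t) q = q.eval t := fun t q => by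
    simp [Polynomial.aeval_def, Polynomial.eval₂_eq_eval_map]
  have heval_aeval : ∀ (x' : Fin d → ℝ) (i : Fin m),
      MvPolynomial.eval x' (Polynomial.aeval (ℓ i) Q) = Q.eval (MvPolynomial.eval x' (ℓ i)) := by
    intro x' i
    have h1 := Polynomial.aeval_algHom_apply (MvPolynomial.aeval x' (R := ℝ)) (ℓ i) Q
    rw [haeval_eq_eval x' (ℓ i), haeval_eq_eval x' _, hpaeval] at h1
    exact h1.symm
  have hinner : ∀ (x : EuclideanSpace ℝ (Fin d)) (i : Fin m),
      ⟪v i, x⟫ = ∑ j, v i j * x j := by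
    intro x i
    simp [PiLp.inner_apply, RCLike.inner_apply, conj_trivial]
    exact Finset.sum_congr rfl fun j _ => mul_comm _ _
  have hevalℓ : ∀ (x : EuclideanSpace ℝ (Fin d)) (i : Fin m),
      MvPolynomial.eval (fun j => x j) (ℓ i) = -⟪v i, x⟫ := by
    intro x i
    rw [hinner x i, hℓdef]
    simp only [MvPolynomial.eval_sum, MvPolynomial.eval_mul, MvPolynomial.eval_C,
      MvPolynomial.eval_X]
    rw [← Finset.sum_neg_distrib]
    exact Finset.sum_congr rfl fun j _ => by ring
  have hW_eval : ∀ t : ℝ, W.eval t = 1/2 * (T ℝ (K:ℤ)).eval (a * t + b) := by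
    intro t
    rw [hWdef]
    simp [Polynomial.eval_comp, hgdef]
  have hgarg : ∀ t : ℝ, a * t + b = (2*t + 1 + 3*γ) / (1+γ) := by
    intro t
    rw [hadef, hbdef]
    field_simp
    ring
  have harg_lb : ∀ t : ℝ, -1 ≤ t → -1 ≤ a * t + b := by
    intro t ht
    rw [hgarg t, le_div_iff₀ hγp]
    linarith
  have harg_ub : ∀ t : ℝ, t ≤ -γ → a * t + b ≤ 1 := by
    intro t ht
    rw [hgarg t, div_le_one hγp]
    linarith
  have harg_big : ∀ t : ℝ, γ ≤ t → 1 + 4/((K:ℝ)^2+1) ≤ a * t + b := by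
    intro t ht
    rw [hgarg t]
    have hD : (0:ℝ) < (K:ℝ)^2+1 := by positivity
    rw [le_div_iff₀ hγp]
    have h4D : 4*(1+γ)/((K:ℝ)^2+1) ≤ 4*γ := by
      rw [div_le_iff₀ hD]
      nlinarith
    have hexp : (1 + 4/((K:ℝ)^2+1))*(1+γ) = 1+γ+4*(1+γ)/((K:ℝ)^2+1) := by
      field_simp
    linarith
  have hW_abs : ∀ t : ℝ, -1 ≤ t → t ≤ -γ → |W.eval t| ≤ 1/2 := by
    intro t h1 h2
    rw [hW_eval t, abs_mul, abs_of_pos (by norm_num : (0:ℝ) < 1/2)]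
    have := abs_T_le_one (harg_lb t h1) (harg_ub t h2) (K:ℤ)
    linarith
  have hW_lb : ∀ t : ℝ, -1 ≤ t → -(1/2) ≤ W.eval t := by
    intro t h1
    rw [hW_eval t]
    have := neg_one_le_T (harg_lb t h1) (K:ℤ)
    linarith
  have hW_big : ∀ t : ℝ, γ ≤ t → 2 ≤ W.eval t := by
    intro t ht
    rw [hW_eval t]
    have := T_ge_four hK2 (harg_big t ht)
    linarith
  have heval_p : ∀ (x : EuclideanSpace ℝ (Fin d)),
      MvPolynomial.eval (fun j => x j) p = 1 - ∑ i, (W.eval (-⟪v i, x⟫)) ^ L := by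
    intro x
    rw [hpdef, map_sub, MvPolynomial.eval_C, MvPolynomial.eval_sum]
    congr 1
    refine Finset.sum_congr rfl fun i _ => ?_
    rw [heval_aeval, hevalℓ, hQdef, Polynomial.eval_pow]
  have hu : ∀ (x : EuclideanSpace ℝ (Fin d)), ‖x‖ ≤ 1 → ∀ i, |⟪v i, x⟫| ≤ 1 := by
    intro x hx i
    refine (abs_real_inner_le_norm (v i) x).trans ?_
    nlinarith [norm_nonneg (v i), norm_nonneg x, hv i, hx]
  have h_half_le : (1/2:ℝ)^L ≤ 1/(2*(m:ℝ)) := by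
    rw [one_div_pow]
    rw [div_le_div_iff₀ (by positivity) (by positivity)]
    nlinarith [h2L]
  refine ⟨p, ?_, ?_, ?_, ?_⟩
  · -- R⁺ condition
    intro x hx hpos
    rw [heval_p x]
    have hsum : ∑ i, (W.eval (-⟪v i, x⟫))^L ≤ 1/2 := by
      have hterm : ∀ i ∈ (univ : Finset (Fin m)), (W.eval (-⟪v i, x⟫))^L ≤ 1/(2*(m:ℝ)) := by
        intro i _
        have h1 : -1 ≤ -⟪v i, x⟫ := by
          have := (abs_le.1 (hu x hx i)).2
          linarith
        have h2 : -⟪v i, x⟫ ≤ -γ := by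
          have := hpos i
          linarith
        have h3 := hW_abs _ h1 h2
        calc (W.eval (-⟪v i, x⟫))^L ≤ |(W.eval (-⟪v i, x⟫))^L| := le_abs_self _
          _ = |W.eval (-⟪v i, x⟫)|^L := abs_pow _ _
          _ ≤ (1/2)^L := pow_le_pow_left₀ (abs_nonneg _) h3 L
          _ ≤ 1/(2*(m:ℝ)) := h_half_le
      calc ∑ i, (W.eval (-⟪v i, x⟫))^L
          ≤ (univ : Finset (Fin m)).card • (1/(2*(m:ℝ))) :=
            Finset.sum_le_card_nsmul _ _ _ hterm
        _ = (m:ℝ) * (1/(2*(m:ℝ))) := by rw [card_univ, Fintype.card_fin, nsmul_eq_mul]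
        _ ≤ 1/2 := by
            rw [mul_one_div, div_le_div_iff₀ (by positivity) (by norm_num)]
            linarith
    linarith
  · -- R⁻ condition
    rintro x hx ⟨i₀, hi₀⟩
    rw [heval_p x]
    have hbig : 2 ≤ (W.eval (-⟪v i₀, x⟫))^L := by
      have hγt : γ ≤ -⟪v i₀, x⟫ := by linarith
      have hWb := hW_big _ hγt
      have h1 : (2:ℝ)^L ≤ (W.eval (-⟪v i₀, x⟫))^L :=
        pow_le_pow_left₀ (by norm_num) hWb L
      have h2 : (2:ℝ) ≤ 2^L := by
        calc (2:ℝ) = 2^1 := (pow_one 2).symm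
          _ ≤ 2^L := pow_le_pow_right₀ (by norm_num) hL1
      linarith
    have hrest : -(1/2:ℝ) ≤ ∑ i ∈ univ.erase i₀, (W.eval (-⟪v i, x⟫))^L := by
      have hterm : ∀ i ∈ univ.erase i₀, -(1/(2*(m:ℝ))) ≤ (W.eval (-⟪v i, x⟫))^L := by
        intro i _
        have h1 : -1 ≤ -⟪v i, x⟫ := by
          have := (abs_le.1 (hu x hx i)).2
          linarith
        have h4 := hW_lb _ h1
        have h5 := neg_pow_bound (by norm_num : (0:ℝ) ≤ 1/2) h4 L
        linarith [h_half_le]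
      have hcard : (univ.erase i₀).card = m - 1 := by
        rw [card_erase_of_mem (mem_univ _), card_univ, Fintype.card_fin]
      have hm12 : ((m:ℝ)-1) * (1/(2*(m:ℝ))) ≤ 1/2 := by
        rw [mul_one_div, div_le_div_iff₀ (by positivity) (by norm_num)]
        linarith
      calc -(1/2:ℝ) ≤ -(((m:ℝ)-1) * (1/(2*(m:ℝ)))) := by linarith
        _ = (univ.erase i₀).card • (-(1/(2*(m:ℝ)))) := by
            rw [hcard, nsmul_eq_mul, Nat.cast_sub hm1]
            push_cast
            ring
        _ ≤ ∑ i ∈ univ.erase i₀, (W.eval (-⟪v i, x⟫))^L :=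
            Finset.card_nsmul_le_sum _ _ _ hterm
    have hsplit : ∑ i, (W.eval (-⟪v i, x⟫))^L =
        (W.eval (-⟪v i₀, x⟫))^L + ∑ i ∈ univ.erase i₀, (W.eval (-⟪v i, x⟫))^L :=
      (Finset.add_sum_erase _ _ (mem_univ i₀)).symm
    rw [hsplit]
    linarith
  · -- degree bound
    have hdegg : g.natDegree ≤ 1 := by
      rw [hgdef]
      refine (Polynomial.natDegree_add_le _ _).trans ?_
      have h1 : (Polynomial.C a * Polynomial.X : Polynomial ℝ).natDegree ≤ 1 :=
        Polynomial.natDegree_mul_le.trans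
          (by simp only [Polynomial.natDegree_C, Nat.zero_add]; exact Polynomial.natDegree_X_le)
      simp only [Polynomial.natDegree_C]
      omega
    have hdegW : W.natDegree ≤ K := by
      rw [hWdef]
      refine Polynomial.natDegree_mul_le.trans ?_
      have h1 : ((T ℝ (K:ℤ)).comp g).natDegree ≤ K :=
        Polynomial.natDegree_comp_le.trans (by
          calc (T ℝ (K:ℤ)).natDegree * g.natDegree ≤ K * 1 :=
            Nat.mul_le_mul (natDegree_T_le K) hdegg
          _ = K := Nat.mul_one K)
      simp only [Polynomial.natDegree_C]
      omega
    have hdegQ : Q.natDegree ≤ n := by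
      rw [hQdef]
      refine Polynomial.natDegree_pow_le.trans ?_
      calc L * W.natDegree ≤ L * K := Nat.mul_le_mul_left L hdegW
        _ = n := hndef.symm
    have hdegℓ : ∀ i, (ℓ i).totalDegree ≤ 1 := by
      intro i
      rw [hℓdef]
      refine (MvPolynomial.totalDegree_finset_sum _ _).trans ?_
      refine Finset.sup_le fun j _ => ?_
      refine (MvPolynomial.totalDegree_mul _ _).trans ?_
      rw [MvPolynomial.totalDegree_C, MvPolynomial.totalDegree_X]
    have hdeg_aeval : ∀ i, (Polynomial.aeval (ℓ i) Q).totalDegree ≤ n := by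
      intro i
      rw [Polynomial.aeval_eq_sum_range]
      refine (MvPolynomial.totalDegree_finset_sum _ _).trans ?_
      refine Finset.sup_le fun k hk => ?_
      have hk' : k ≤ Q.natDegree := by
        have := mem_range.1 hk
        omega
      rw [MvPolynomial.smul_eq_C_mul]
      refine (MvPolynomial.totalDegree_mul _ _).trans ?_
      rw [MvPolynomial.totalDegree_C]
      have h1 := (MvPolynomial.totalDegree_pow (ℓ i) k).trans
        (Nat.mul_le_mul_left k (hdegℓ i))
      omega
    rw [hpdef, sub_eq_add_neg]
    refine (MvPolynomial.totalDegree_add _ _).trans ?_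
    have h1 : (MvPolynomial.C 1 : MvPolynomial (Fin d) ℝ).totalDegree = 0 :=
      MvPolynomial.totalDegree_C 1
    have h2 : (-∑ i, Polynomial.aeval (ℓ i) Q).totalDegree ≤ n := by
      rw [MvPolynomial.totalDegree_neg]
      exact (MvPolynomial.totalDegree_finset_sum _ _).trans
        (Finset.sup_le fun i _ => hdeg_aeval i)
    omega
  · -- norm bound
    have hw2 : ∀ i, ∑ j, (-(v i j))^2 ≤ 1 := by
      intro i
      have h0 := hinner (v i) i
      have h1 : ⟪v i, v i⟫ ≤ 1 := by
        rw [real_inner_self_eq_norm_sq]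
        nlinarith [norm_nonneg (v i), hv i]
      rw [h0] at h1
      calc ∑ j, (-(v i j))^2 = ∑ j, v i j * v i j :=
            Finset.sum_congr rfl fun j _ => by ring
        _ ≤ 1 := h1
    have hdegg : g.natDegree ≤ 1 := by
      rw [hgdef]
      refine (Polynomial.natDegree_add_le _ _).trans ?_
      have h1 : (Polynomial.C a * Polynomial.X : Polynomial ℝ).natDegree ≤ 1 :=
        Polynomial.natDegree_mul_le.trans
          (by simp only [Polynomial.natDegree_C, Nat.zero_add]; exact Polynomial.natDegree_X_le)
      simp only [Polynomial.natDegree_C]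
      omega
    have hdegW : W.natDegree ≤ K := by
      rw [hWdef]
      refine Polynomial.natDegree_mul_le.trans ?_
      have h1 : ((T ℝ (K:ℤ)).comp g).natDegree ≤ K :=
        Polynomial.natDegree_comp_le.trans (by
          calc (T ℝ (K:ℤ)).natDegree * g.natDegree ≤ K * 1 :=
            Nat.mul_le_mul (natDegree_T_le K) hdegg
          _ = K := Nat.mul_one K)
      simp only [Polynomial.natDegree_C]
      omega
    have hdegQ : Q.natDegree ≤ n := by
      rw [hQdef]
      refine Polynomial.natDegree_pow_le.trans ?_
      calc L * W.natDegree ≤ L * K := Nat.mul_le_mul_left L hdegW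
        _ = n := hndef.symm
    have hnorm_aeval : ∀ i, polyNorm (Polynomial.aeval (ℓ i) Q) ≤
        Real.sqrt (n.factorial) * l1 Q := by
      intro i
      rw [Polynomial.aeval_eq_sum_range]
      refine (polyNorm_sum_le _ _).trans ?_
      have hterm : ∀ k ∈ range (Q.natDegree + 1),
          polyNorm (Q.coeff k • ℓ i ^ k) ≤ |Q.coeff k| * Real.sqrt (n.factorial) := by
        intro k hk
        refine (polyNorm_smul_le _ _).trans ?_
        refine mul_le_mul_of_nonneg_left ?_ (abs_nonneg _)
        have hℓform : ℓ i = ∑ j, MvPolynomial.C (-(v i j)) * MvPolynomial.X j := by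
          rw [hℓdef]
        rw [hℓform]
        refine (polyNorm_linear_pow (fun j => -(v i j)) (hw2 i) k).trans ?_
        apply Real.sqrt_le_sqrt
        have hk' : k ≤ n := by
          have := mem_range.1 hk
          omega
        exact_mod_cast Nat.factorial_le hk'
      refine (Finset.sum_le_sum hterm).trans ?_
      rw [← Finset.sum_mul, ← l1_eq_range (Nat.lt_succ_self _)]
      ring_nf
      exact le_of_eq (by ring)
    have hg3 : l1 g ≤ 3 := by
      rw [hgdef]
      refine (l1_add_le _ _).trans ?_
      have h1 : l1 (Polynomial.C a * Polynomial.X) ≤ a := by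
        refine (l1_mul_le _ _).trans ?_
        rw [l1_C, l1_X, abs_of_pos ha0, mul_one]
      rw [l1_C, abs_of_pos hb0]
      linarith
    have hl1W : l1 W ≤ 1/2 * (31/5:ℝ)^K := by
      rw [hWdef]
      refine (l1_mul_le _ _).trans ?_
      rw [l1_C, abs_of_pos (by norm_num : (0:ℝ) < 1/2)]
      have h1 := l1_T_comp_le g hg3 K
      nlinarith [l1_nonneg ((T ℝ ((K:ℕ):ℤ)).comp g)]
    have hl1Q : l1 Q ≤ (1/2:ℝ)^L * (31/5:ℝ)^n := by
      rw [hQdef]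
      refine (l1_pow_le _ _).trans ?_
      calc (l1 W)^L ≤ (1/2 * (31/5:ℝ)^K)^L := pow_le_pow_left₀ (l1_nonneg W) hl1W L
        _ = (1/2:ℝ)^L * ((31/5:ℝ)^K)^L := mul_pow _ _ _
        _ = (1/2:ℝ)^L * (31/5:ℝ)^n := by rw [← pow_mul, Nat.mul_comm K L]
    have hfinal : polyNorm p ≤ 1 + 1/2 * (Real.sqrt (n.factorial) * (31/5:ℝ)^n) := by
      rw [hpdef, sub_eq_add_neg]
      refine (polyNorm_add_le _ _).trans ?_
      rw [polyNorm_neg]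
      have h1 : polyNorm (MvPolynomial.C 1 : MvPolynomial (Fin d) ℝ) ≤ 1 :=
        (polyNorm_C_le 1).trans (by norm_num)
      have h2 : polyNorm (∑ i, Polynomial.aeval (ℓ i) Q) ≤
          (m:ℝ) * (Real.sqrt (n.factorial) * l1 Q) := by
        refine (polyNorm_sum_le _ _).trans ?_
        calc ∑ i, polyNorm (Polynomial.aeval (ℓ i) Q)
            ≤ (univ : Finset (Fin m)).card • (Real.sqrt (n.factorial) * l1 Q) :=
              Finset.sum_le_card_nsmul _ _ _ (fun i _ => hnorm_aeval i)
          _ = (m:ℝ) * (Real.sqrt (n.factorial) * l1 Q) := by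
              rw [card_univ, Fintype.card_fin, nsmul_eq_mul]
      have hm2 : (m:ℝ) * (1/2:ℝ)^L ≤ 1/2 := by
        rw [one_div_pow, mul_one_div, div_le_div_iff₀ (by positivity) (by norm_num)]
        linarith
      have h3 : (m:ℝ) * (Real.sqrt (n.factorial) * l1 Q) ≤
          1/2 * (Real.sqrt (n.factorial) * (31/5:ℝ)^n) := by
        have hs0 : (0:ℝ) ≤ Real.sqrt (n.factorial) := Real.sqrt_nonneg _
        calc (m:ℝ) * (Real.sqrt (n.factorial) * l1 Q)
            ≤ (m:ℝ) * (Real.sqrt (n.factorial) * ((1/2:ℝ)^L * (31/5:ℝ)^n)) := by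
              refine mul_le_mul_of_nonneg_left (mul_le_mul_of_nonneg_left hl1Q hs0) ?_
              positivity
          _ = ((m:ℝ) * (1/2:ℝ)^L) * (Real.sqrt (n.factorial) * (31/5:ℝ)^n) := by ring
          _ ≤ 1/2 * (Real.sqrt (n.factorial) * (31/5:ℝ)^n) :=
              mul_le_mul_of_nonneg_right hm2 (by positivity)
      linarith
    have hRHS : (188 * ((n:ℕ):ℝ)) ^ (((n:ℕ):ℝ)/2) = Real.sqrt (188 * (n:ℝ)) ^ (n:ℕ) := by
      rw [Real.sqrt_eq_rpow, ← Real.rpow_natCast ((188 * (n:ℝ)) ^ ((1:ℝ)/2)) n,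
        ← Real.rpow_mul (by positivity)]
      congr 1
      ring
    have hsqrtn : Real.sqrt (n.factorial) ≤ Real.sqrt (n:ℝ) ^ (n:ℕ) := by
      have h1 : ((n.factorial : ℕ):ℝ) ≤ ((n:ℝ))^(n:ℕ) := by exact_mod_cast Nat.factorial_le_pow n
      refine (Real.sqrt_le_sqrt h1).trans ?_
      rw [sqrt_pow_aux (by positivity) n]
    have hs1 : 1 ≤ Real.sqrt (n:ℝ) := Real.one_le_sqrt.2 (by exact_mod_cast (by omega : 1 ≤ n))
    have h137 : (137/10:ℝ) * Real.sqrt (n:ℝ) ≤ Real.sqrt (188 * (n:ℝ)) := by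
      rw [Real.sqrt_mul (by norm_num : (0:ℝ) ≤ 188) (n:ℝ)]
      refine mul_le_mul_of_nonneg_right ?_ (Real.sqrt_nonneg _)
      exact (Real.le_sqrt (by norm_num) (by norm_num)).2 (by norm_num)
    rw [hRHS]
    have hkey := key_ineq n (by omega)
    have hS : 1 ≤ Real.sqrt (n:ℝ) ^ (n:ℕ) := one_le_pow₀ hs1
    have hSA : (0:ℝ) ≤ (31/5:ℝ)^n := by positivity
    calc polyNorm p ≤ 1 + 1/2 * (Real.sqrt (n.factorial) * (31/5:ℝ)^n) := hfinal
      _ ≤ 1 + 1/2 * (Real.sqrt (n:ℝ) ^ (n:ℕ) * (31/5:ℝ)^n) := by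
          have := mul_le_mul_of_nonneg_right hsqrtn hSA
          linarith
      _ ≤ Real.sqrt (n:ℝ) ^ (n:ℕ) * (137/10:ℝ)^n := by
          nlinarith [mul_le_mul_of_nonneg_left hkey
            (by positivity : (0:ℝ) ≤ Real.sqrt (n:ℝ) ^ (n:ℕ))]
      _ = ((137/10:ℝ) * Real.sqrt (n:ℝ))^(n:ℕ) := by rw [mul_pow]; ring
      _ ≤ Real.sqrt (188 * (n:ℝ)) ^ (n:ℕ) := pow_le_pow_left₀ (by positivity) h137 n
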